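/- Let n ≥ 4, let V be an n-dimensional real vector space with a positive definite symmetric bilinear form h, let 𝒮 be an h-self-adjoint endomorphism with exactly two distinct eigenvalues λ₁ (of multiplicity k) and λ₂ (of multiplicity n−k), where 2 ≤ k ≤ n−2 and (k−1)λ₁ + (n−k−1)λ₂ ≠ 0; set S(X,Y) = h(X,𝒮Y) and R* = (1/2) S∧S. Then R* = (φ/2)·(Ric(R*) − λ₁λ₂·h) ∧ (Ric(R*) − λ₁λ₂·h), where φ = ((k−1)λ₁ + (n−k−1)λ₂)⁻². -/

import Mathlib

namespace OVAff

variable {V : Type*} [AddCommGroup V] [Module ℝ V]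

/-- Kulkarni–Nomizu product of two (0,2)-tensors. -/
noncomputable def KN (E F : V → V → ℝ) : V → V → V → V → ℝ := fun X₁ X₂ X₃ X₄ =>
  E X₁ X₄ * F X₂ X₃ + E X₂ X₃ * F X₁ X₄ - E X₁ X₃ * F X₂ X₄ - E X₂ X₄ * F X₁ X₃

/-- Kulkarni–Nomizu product of a (0,2)-tensor with a (0,4)-tensor. -/
noncomputable def KN4 (E : V → V → ℝ) (T : V → V → V → V → ℝ) :
    V → V → V → V → V → V → ℝ := fun X₁ X₂ X₃ X₄ Y₁ Y₂ =>
  E X₁ X₄ * T X₂ X₃ Y₁ Y₂ + E X₂ X₃ * T X₁ X₄ Y₁ Y₂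
    - E X₁ X₃ * T X₂ X₄ Y₁ Y₂ - E X₂ X₄ * T X₁ X₃ Y₁ Y₂

/-- (X ∧_A Y) Z = A(Y,Z) X − A(X,Z) Y. -/
noncomputable def wedgeVec (A : V → V → ℝ) (X Y Z : V) : V := A Y Z • X - A X Z • Y

/-- Tachibana operator Q(A,T) on a (0,2)-tensor T. -/
noncomputable def Q2 (A T : V → V → ℝ) : V → V → V → V → ℝ :=
  fun X₁ X₂ X Y => -(T (wedgeVec A X Y X₁) X₂ + T X₁ (wedgeVec A X Y X₂))

/-- Tachibana operator Q(A,T) on a (0,4)-tensor T. -/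
noncomputable def Q4 (A : V → V → ℝ) (T : V → V → V → V → ℝ) :
    V → V → V → V → V → V → ℝ := fun X₁ X₂ X₃ X₄ X Y =>
  -(T (wedgeVec A X Y X₁) X₂ X₃ X₄ + T X₁ (wedgeVec A X Y X₂) X₃ X₄
    + T X₁ X₂ (wedgeVec A X Y X₃) X₄ + T X₁ X₂ X₃ (wedgeVec A X Y X₄))

/-- The derivation B·T of a curvature operator family ℬ (with h(ℬ(X,Y)Z,W)=B(X,Y,Z,W))
acting on a (0,2)-tensor T. -/
noncomputable def dot2 (ℬ : V → V → V → V) (T : V → V → ℝ) : V → V → V → V → ℝ :=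
  fun X₁ X₂ X Y => -(T (ℬ X Y X₁) X₂ + T X₁ (ℬ X Y X₂))

/-- The derivation B·T acting on a (0,4)-tensor T. -/
noncomputable def dot4 (ℬ : V → V → V → V) (T : V → V → V → V → ℝ) :
    V → V → V → V → V → V → ℝ := fun X₁ X₂ X₃ X₄ X Y =>
  -(T (ℬ X Y X₁) X₂ X₃ X₄ + T X₁ (ℬ X Y X₂) X₃ X₄
    + T X₁ X₂ (ℬ X Y X₃) X₄ + T X₁ X₂ X₃ (ℬ X Y X₄))

/-- Ricci contraction of a (0,4)-tensor with respect to an h-orthonormal basis `e`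
with signs `ε`. -/
noncomputable def ricci {n : ℕ} (ε : Fin n → ℝ) (e : Fin n → V)
    (B : V → V → V → V → ℝ) : V → V → ℝ :=
  fun X Y => ∑ j, ε j * B (e j) X Y (e j)

/-- Scalar curvature of a (0,4)-tensor. -/
noncomputable def scal {n : ℕ} (ε : Fin n → ℝ) (e : Fin n → V)
    (B : V → V → V → V → ℝ) : ℝ :=
  ∑ j, ε j * ricci ε e B (e j) (e j)

/-- Weyl tensor of a (0,4)-tensor with respect to the metric h. -/
noncomputable def weyl {n : ℕ} (h : V → V → ℝ) (ε : Fin n → ℝ) (e : Fin n → V)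
    (B : V → V → V → V → ℝ) : V → V → V → V → ℝ := fun X₁ X₂ X₃ X₄ =>
  B X₁ X₂ X₃ X₄ - (1 / ((n : ℝ) - 2)) * KN h (ricci ε e B) X₁ X₂ X₃ X₄
    + (scal ε e B / (2 * ((n : ℝ) - 2) * ((n : ℝ) - 1))) * KN h h X₁ X₂ X₃ X₄


/-- two distinct affine principal curvatures with multiplicities k and n−k,
2 ≤ k ≤ n−2 and (k−1)λ₁+(n−k−1)λ₂ ≠ 0: Roter-type form for R*. -/
theorem statement8
    {V : Type*} [AddCommGroup V] [Module ℝ V]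
    (n : ℕ) (hn : 4 ≤ n)
    (h : LinearMap.BilinForm ℝ V)
    (hsymm : ∀ X Y, h X Y = h Y X)
    (hnd : ∀ X : V, (∀ Y, h X Y = 0) → X = 0)
    [FiniteDimensional ℝ V] (hdim : Module.finrank ℝ V = n)
    (hpos : ∀ X : V, X ≠ 0 → 0 < h X X)
    (e : Module.Basis (Fin n) ℝ V)
    (he : ∀ j k, h (e j) (e k) = if j = k then (1 : ℝ) else 0)
    (𝒮 : V →ₗ[ℝ] V) (hsa : ∀ X Y, h (𝒮 X) Y = h X (𝒮 Y))
    (S : V → V → ℝ) (hS : S = fun X Y => h X (𝒮 Y))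
    (Rstar : V → V → V → V → ℝ)
    (hRstar : Rstar = fun X₁ X₂ X₃ X₄ => (1 / 2 : ℝ) * KN S S X₁ X₂ X₃ X₄)
    (k : ℕ) (hk2 : 2 ≤ k) (hkn : k ≤ n - 2)
    (l₁ l₂ : ℝ) (hne : l₁ ≠ l₂)
    (heig : ∀ t : ℝ, Module.End.HasEigenvalue 𝒮 t ↔ t = l₁ ∨ t = l₂)
    (hm₁ : Module.finrank ℝ ↥(Module.End.eigenspace 𝒮 l₁) = k)
    (hm₂ : Module.finrank ℝ ↥(Module.End.eigenspace 𝒮 l₂) = n - k)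
    (hcnd : ((k : ℝ) - 1) * l₁ + ((n : ℝ) - (k : ℝ) - 1) * l₂ ≠ 0) :
    ∀ X₁ X₂ X₃ X₄, Rstar X₁ X₂ X₃ X₄
      = ((((k : ℝ) - 1) * l₁ + ((n : ℝ) - (k : ℝ) - 1) * l₂) ^ 2)⁻¹ / 2
        * KN (fun X Y => ricci (fun _ => (1 : ℝ)) (⇑e) Rstar X Y - l₁ * l₂ * h X Y)
            (fun X Y => ricci (fun _ => (1 : ℝ)) (⇑e) Rstar X Y - l₁ * l₂ * h X Y)
            X₁ X₂ X₃ X₄ := by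

  -- abbreviations
  set E₁ := Module.End.eigenspace 𝒮 l₁ with hE₁
  set E₂ := Module.End.eigenspace 𝒮 l₂ with hE₂
  -- h against basis vectors recovers coordinates
  have hrepr : ∀ (j : Fin n) (v : V), h (e j) v = e.repr v j := by
    intro j v
    conv_lhs => rw [← e.sum_repr v]
    rw [map_sum]
    rw [Finset.sum_eq_single j]
    · simp [he]
    · intro i _ hij
      simp [he, (Ne.symm hij)]
    · intro hj; exact absurd (Finset.mem_univ j) hj
  have hsum : ∀ v w : V, (∑ j, h v (e j) * h (e j) w) = h v w := by
    intro v w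
    conv_rhs => rw [← e.sum_repr w, map_sum]
    simp only [map_smul, smul_eq_mul]
    refine Finset.sum_congr rfl fun j _ => ?_
    rw [hrepr j w]; ring
  -- eigenspaces are disjoint and span
  have hdisj : Disjoint E₁ E₂ := by
    rw [Submodule.disjoint_def]
    intro x hx₁ hx₂
    rw [Module.End.mem_eigenspace_iff] at hx₁ hx₂
    have : (l₁ - l₂) • x = 0 := by rw [sub_smul, hx₁.symm.trans hx₂]; simp
    rcases smul_eq_zero.mp this with h1 | h1
    · exact absurd (sub_eq_zero.mp h1) hne
    · exact h1
  have hkle : k ≤ n := by omega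
  have hsup : E₁ ⊔ E₂ = ⊤ := by
    apply Submodule.eq_top_of_finrank_eq
    have h1 := Submodule.finrank_sup_add_finrank_inf_eq E₁ E₂
    rw [hdisj.eq_bot] at h1
    simp only [finrank_bot, add_zero] at h1
    rw [h1, hm₁, hm₂, hdim]; omega
  -- quadratic relation
  have hquad : ∀ X : V, 𝒮 (𝒮 X) = (l₁ + l₂) • 𝒮 X - (l₁ * l₂) • X := by
    intro X
    have hX : X ∈ E₁ ⊔ E₂ := by rw [hsup]; trivial
    obtain ⟨x, hx, y, hy, rfl⟩ := Submodule.mem_sup.mp hX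
    rw [Module.End.mem_eigenspace_iff] at hx hy
    rw [map_add, map_add, hx, hy, map_smul, map_smul, hx, hy]
    module
  -- trace of 𝒮 computed two ways
  have hcompl : IsCompl E₁ E₂ := ⟨hdisj, codisjoint_iff.mpr hsup⟩
  let b₁ : Module.Basis (Fin k) ℝ E₁ := Module.finBasisOfFinrankEq ℝ E₁ hm₁
  let b₂ : Module.Basis (Fin (n - k)) ℝ E₂ := Module.finBasisOfFinrankEq ℝ E₂ hm₂
  let b : Module.Basis (Fin k ⊕ Fin (n - k)) ℝ V :=
    (b₁.prod b₂).map (Submodule.prodEquivOfIsCompl E₁ E₂ hcompl)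
  have hbval : ∀ i, 𝒮 (b i) = (Sum.elim (fun _ => l₁) (fun _ => l₂) i) • b i := by
    intro i
    have hb : b i = ((b₁.prod b₂) i).1.1 + ((b₁.prod b₂) i).2.1 := by
      simp [b, Module.Basis.map_apply, Submodule.coe_prodEquivOfIsCompl']
    cases i with
    | inl i =>
        have h1 : ((b₁.prod b₂) (Sum.inl i)).1 = b₁ i := Module.Basis.prod_apply_inl_fst _ _ _
        have h2 : ((b₁.prod b₂) (Sum.inl i)).2 = 0 := Module.Basis.prod_apply_inl_snd _ _ _
        have hmem : (b₁ i : V) ∈ E₁ := (b₁ i).2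
        rw [Module.End.mem_eigenspace_iff] at hmem
        rw [hb, h1, h2]
        simpa using hmem
    | inr i =>
        have h1 : ((b₁.prod b₂) (Sum.inr i)).1 = 0 := Module.Basis.prod_apply_inr_fst _ _ _
        have h2 : ((b₁.prod b₂) (Sum.inr i)).2 = b₂ i := Module.Basis.prod_apply_inr_snd _ _ _
        have hmem : (b₂ i : V) ∈ E₂ := (b₂ i).2
        rw [Module.End.mem_eigenspace_iff] at hmem
        rw [hb, h1, h2]
        simpa using hmem
  have htr1 : LinearMap.trace ℝ V 𝒮 = ∑ j, h (e j) (𝒮 (e j)) := by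
    rw [LinearMap.trace_eq_matrix_trace ℝ e, Matrix.trace]
    refine Finset.sum_congr rfl fun j _ => ?_
    rw [Matrix.diag_apply, LinearMap.toMatrix_apply, hrepr]
  have htr2 : LinearMap.trace ℝ V 𝒮 = (k : ℝ) * l₁ + ((n : ℝ) - (k : ℝ)) * l₂ := by
    rw [LinearMap.trace_eq_matrix_trace ℝ b, Matrix.trace]
    have hdiag : ∀ i, Matrix.diag (LinearMap.toMatrix b b 𝒮) i
        = Sum.elim (fun _ => l₁) (fun _ => l₂) i := by
      intro i
      rw [Matrix.diag_apply, LinearMap.toMatrix_apply, hbval i, map_smul]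
      simp
    rw [Finset.sum_congr rfl fun i _ => hdiag i, Fintype.sum_sum_type]
    simp only [Sum.elim_inl, Sum.elim_inr, Finset.sum_const, Finset.card_univ,
      Fintype.card_fin, nsmul_eq_mul]
    rw [Nat.cast_sub hkle]
  -- S symmetric facts
  have hSl : ∀ (X : V) (j : Fin n), S X (e j) = h (𝒮 X) (e j) := by
    intro X j; rw [hS]; exact (hsa X (e j)).symm
  -- the Ricci contraction of Rstar
  set c : ℝ := ((k : ℝ) - 1) * l₁ + ((n : ℝ) - (k : ℝ) - 1) * l₂ with hc
  have hric : ∀ X Y : V,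
      ricci (fun _ => (1 : ℝ)) (⇑e) Rstar X Y - l₁ * l₂ * h X Y = c * S X Y := by
    intro X Y
    have hterm : ∀ j : Fin n, (1 : ℝ) * Rstar (e j) X Y (e j)
        = S (e j) (e j) * S X Y - S X (e j) * S (e j) Y := by
      intro j; rw [hRstar]; simp only [KN]; ring
    have h₁ : (∑ j, S (e j) (e j)) = (k : ℝ) * l₁ + ((n : ℝ) - (k : ℝ)) * l₂ := by
      rw [← htr2, htr1]
      exact Finset.sum_congr rfl fun j _ => by rw [hS]
    have h₂ : (∑ j, S X (e j) * S (e j) Y)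
        = (l₁ + l₂) * S X Y - l₁ * l₂ * h X Y := by
      have : (∑ j, S X (e j) * S (e j) Y) = h (𝒮 X) (𝒮 Y) := by
        rw [← hsum (𝒮 X) (𝒮 Y)]
        exact Finset.sum_congr rfl fun j _ => by rw [hSl, hS]
      rw [this, hsa X (𝒮 Y), hquad Y, map_sub, map_smul, map_smul, hS]
      simp [smul_eq_mul]
    rw [ricci]
    rw [Finset.sum_congr rfl fun j _ => hterm j, Finset.sum_sub_distrib,
      ← Finset.sum_mul, h₁, h₂, hc]
    ring
  -- conclude
  intro X₁ X₂ X₃ X₄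
  simp only [hric]
  rw [hRstar]
  simp only [KN]
  have hc0 : c ≠ 0 := hcnd
  field_simp


end OVAff
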